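/- If a graph has a dismantling ordering, then it has a dismantling ordering in which every vertex of corner rank 1 appears before every vertex of corner rank greater than 1. -/

import Mathlib

open Classical

/-- A finite reflexive graph: adjacency is symmetric and every vertex is
adjacent to itself (closed neighborhood `N[v] = {u | Adj v u}`). -/
structure RefGraph (V : Type*) where
  Adj : V → V → Prop
  symm : ∀ u v, Adj u v → Adj v u
  refl : ∀ v, Adj v v

namespace RefGraph

variable {V : Type*}

/-- `w` strictly corners `v` within the induced subgraph on `S`,
i.e. `N_S[v] ⊊ N_S[w]`. -/
def StrictCornersIn (G : RefGraph V) (S : Set V) (w v : V) : Prop :=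
  w ∈ S ∧ v ∈ S ∧ (∀ u ∈ S, G.Adj v u → G.Adj w u) ∧ ∃ u ∈ S, G.Adj w u ∧ ¬ G.Adj v u

/-- `v` is a strict corner of the induced subgraph on `S`. -/
def IsStrictCorner (G : RefGraph V) (S : Set V) (v : V) : Prop :=
  ∃ w, G.StrictCornersIn S w v

/-- `S` induces a clique. -/
def IsCliqueSet (G : RefGraph V) (S : Set V) : Prop :=
  ∀ u ∈ S, ∀ v ∈ S, G.Adj u v

/-- `lvl k` is the vertex set of the graph `G_{k+1}` of the corner ranking
procedure: start with all vertices and repeatedly delete all strict corners. -/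
def lvl (G : RefGraph V) : ℕ → Set V
  | 0 => Set.univ
  | k + 1 => {v ∈ G.lvl k | ¬ G.IsStrictCorner (G.lvl k) v}

/-- The corner rank of a vertex: the stage (1-indexed) at which it is a strict
corner, or at which the remaining graph is a clique; `∞` if neither ever occurs. -/
noncomputable def cr (G : RefGraph V) (v : V) : ℕ∞ :=
  sInf {n : ℕ∞ | ∃ m : ℕ, n = (m : ℕ∞) + 1 ∧ v ∈ G.lvl m ∧
    (G.IsStrictCorner (G.lvl m) v ∨ G.IsCliqueSet (G.lvl m))}

/-- The vertex set of `Gₖ`: the vertices of corner rank at least `k`. -/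
def GkSet (G : RefGraph V) (k : ℕ) : Set V := {v | (k : ℕ∞) ≤ G.cr v}

/-- The corner rank of the graph: the largest corner rank of a vertex. -/
noncomputable def crGraph (G : RefGraph V) [Fintype V] : ℕ∞ :=
  Finset.univ.sup fun v => G.cr v

/-- The projection map `fₖ` on a single vertex `u` of `Gₖ`. -/
noncomputable def fk (G : RefGraph V) (k : ℕ) (u : V) : Set V :=
  if (k : ℕ∞) < G.cr u then {u}
  else {w | w ∈ G.GkSet (k + 1) ∧ G.StrictCornersIn (G.GkSet k) w u}

/-- The projection map `Fₖ`: `F₁` is the identity and `Fₖ₊₁ = fₖ ∘ Fₖ`. -/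
noncomputable def Fk (G : RefGraph V) : ℕ → V → Set V
  | 0, v => {v}
  | 1, v => {v}
  | k + 2, v => ⋃ u ∈ G.Fk (k + 1) v, G.fk (k + 1) u

/-- `r` is `k`-cornered by `c`: for `k = 0`, `c = r`; for `k ≥ 1`, some
`r' ∈ Fₖ(r)` is cornered by `c` in the subgraph induced by `V(Gₖ) ∪ {c}`. -/
def kCornered (G : RefGraph V) : ℕ → V → V → Prop
  | 0, c, r => c = r
  | k + 1, c, r => ∃ r' ∈ G.Fk (k + 1) r,
      ∀ u, (u ∈ G.GkSet (k + 1) ∨ u = c) → G.Adj r' u → G.Adj c u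

/-- With the cop at `c`, the vertex `r` is `k`-proj-safe: `cr r ≥ k` and some
`c' ∈ Fₖ(c)` is not adjacent to `r`. -/
def ProjSafe (G : RefGraph V) (k : ℕ) (c r : V) : Prop :=
  (k : ℕ∞) ≤ G.cr r ∧ ∃ c' ∈ G.Fk k c, ¬ G.Adj c' r

/-- The cop at `c` can win within `k` cop moves against the robber at `r`,
robber to move. -/
def WinWithin (G : RefGraph V) : ℕ → V → V → Prop
  | 0, c, r => c = r
  | k + 1, c, r => c = r ∨ ∀ r₁, G.Adj r r₁ → ∃ c₁, G.Adj c c₁ ∧ G.WinWithin k c₁ r₁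

/-- The cop at `c` can guarantee catching the robber at `r` within `n` cop
moves, cop to move. -/
def CanCatch (G : RefGraph V) : ℕ → V → V → Prop
  | 0, c, r => c = r
  | n + 1, c, r => c = r ∨ ∃ c', G.Adj c c' ∧
      (c' = r ∨ ∀ r', G.Adj r r' → G.CanCatch n c' r')

/-- The cop has a winning strategy: some initial placement from which she can
guarantee capture in some bounded number of moves, whatever the robber does. -/
def CopWin (G : RefGraph V) : Prop :=
  ∃ (n : ℕ) (c₀ : V), ∀ r₀ : V, G.CanCatch n c₀ r₀

/-- The capture time: the least `n` such that the cop has an initial placement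
guaranteeing capture within `n` cop moves. -/
noncomputable def capt (G : RefGraph V) : ℕ :=
  sInf {n : ℕ | ∃ c₀ : V, ∀ r₀ : V, G.CanCatch n c₀ r₀}

/-- A graph of finite corner rank `α` is `1`-cop-win if some vertex of corner
rank `α` is adjacent to every vertex of `G_{α-1}`. -/
def OneCopWin (G : RefGraph V) (α : ℕ) : Prop :=
  ∃ x, G.cr x = (α : ℕ∞) ∧ ∀ u, ((α - 1 : ℕ) : ℕ∞) ≤ G.cr u → G.Adj x u

/-- `r`-cop-win for `r ∈ {0,1}`. -/
def RCopWin (G : RefGraph V) (r α : ℕ) : Prop :=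
  (r = 1 ∧ G.OneCopWin α) ∨ (r = 0 ∧ ¬ G.OneCopWin α)

/-- The largest finite corner rank occurring in `G` (0 if none occurs). -/
noncomputable def gammaMax (G : RefGraph V) : ℕ :=
  sSup {n : ℕ | ∃ v, G.cr v = (n : ℕ∞)}

/-- `F_∞`: equal to `F_{γ+1}` where `γ` is the largest finite corner rank, and
the identity (`F₁`) when no vertex has finite corner rank. -/
noncomputable def Finf (G : RefGraph V) : V → Set V :=
  G.Fk (G.gammaMax + 1)

/-- `e` lists the vertices as a dismantling ordering: every vertex except the
last is cornered, in the induced subgraph on it and the later vertices, by some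
later vertex. -/
def IsDismantlingOrdering (G : RefGraph V) {n : ℕ} (e : Fin n ≃ V) : Prop :=
  ∀ i : Fin n, (i : ℕ) + 1 < n →
    ∃ j : Fin n, i < j ∧ e j ≠ e i ∧
      ∀ u, (∃ m : Fin n, i ≤ m ∧ e m = u) → G.Adj (e i) u → G.Adj (e j) u

/-- `G` has a dismantling ordering. -/
def HasDismantling (G : RefGraph V) [Fintype V] : Prop :=
  ∃ e : Fin (Fintype.card V) ≃ V, G.IsDismantlingOrdering e

/-- `b` corners `a` within the list `a :: t`. -/
def Corners (G : RefGraph V) (a : V) (t : List V) : Prop :=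
  ∃ b ∈ t, b ≠ a ∧ ∀ u ∈ a :: t, G.Adj a u → G.Adj b u

/-- `l` is a dismantling list. -/
def goodL (G : RefGraph V) : List V → Prop
  | [] => True
  | a :: t => (t = [] ∨ G.Corners a t) ∧ G.goodL t

theorem mem_drop_iff {α : Type*} (l : List α) (i : ℕ) (u : α) :
    u ∈ l.drop i ↔ ∃ j, ∃ h : j < l.length, i ≤ j ∧ l[j] = u := by
  constructor
  · intro hu
    obtain ⟨k, hk, he⟩ := List.mem_iff_getElem.1 hu
    have hlen : (l.drop i).length = l.length - i := List.length_drop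
    refine ⟨i + k, by omega, by omega, ?_⟩
    rw [← List.getElem_drop]; exact he
  · rintro ⟨j, h, hij, rfl⟩
    have h2 : j - i < (l.drop i).length := by simp [List.length_drop]; omega
    have : (l.drop i)[j - i]'h2 = l[j] := by
      rw [List.getElem_drop]; congr 1; omega
    rw [← this]; exact List.getElem_mem _

theorem goodL_of_idx (G : RefGraph V) : ∀ (L : List V),
    (∀ i, (hi : i + 1 < L.length) → ∃ j, ∃ hj : j < L.length, i < j ∧
      L[j]'hj ≠ L[i]'(Nat.lt_of_succ_lt hi) ∧
      ∀ u ∈ L.drop i, G.Adj (L[i]'(Nat.lt_of_succ_lt hi)) u → G.Adj (L[j]'hj) u) →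
    G.goodL L
  | [], _ => trivial
  | a :: t, H => by
    constructor
    · rcases t with _ | ⟨b0, t'⟩
      · exact Or.inl rfl
      · right
        obtain ⟨j, hj, hij, hne, hdom⟩ := H 0 (by simp)
        obtain ⟨j', rfl⟩ : ∃ j', j = j' + 1 := ⟨j - 1, by omega⟩
        rw [List.getElem_cons_succ] at hne hdom
        refine ⟨(b0 :: t')[j']'(by simpa using hj), List.getElem_mem _, hne, ?_⟩
        intro u hu
        exact hdom u (by simpa using hu)
    · apply goodL_of_idx G t
      intro i hi
      obtain ⟨j, hj, hij, hne, hdom⟩ := H (i + 1) (by simpa using hi)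
      obtain ⟨j', rfl⟩ : ∃ j', j = j' + 1 := ⟨j - 1, by omega⟩
      rw [List.getElem_cons_succ] at hne hdom
      rw [List.getElem_cons_succ] at hne hdom
      refine ⟨j', by simpa using hj, by omega, hne, ?_⟩
      intro u hu
      exact hdom u (by rw [List.drop_succ_cons]; exact hu)

theorem idx_of_goodL (G : RefGraph V) : ∀ (L : List V), G.goodL L →
    ∀ i, (hi : i + 1 < L.length) → ∃ j, ∃ hj : j < L.length, i < j ∧
      L[j]'hj ≠ L[i]'(Nat.lt_of_succ_lt hi) ∧
      ∀ u ∈ L.drop i, G.Adj (L[i]'(Nat.lt_of_succ_lt hi)) u → G.Adj (L[j]'hj) u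
  | [], _, i, hi => by simp at hi
  | a :: t, ⟨hh, ht⟩, i, hi => by
    match i with
    | 0 =>
      have htne : t ≠ [] := by rintro rfl; simp at hi
      rcases hh with rfl | ⟨b, hb, hba, hdom⟩
      · exact absurd rfl htne
      · obtain ⟨k, hk, hbk⟩ := List.mem_iff_getElem.1 hb
        refine ⟨k + 1, by simpa using hk, by omega, ?_, ?_⟩
        · rw [List.getElem_cons_succ, hbk]; simpa using hba
        · intro u hu hadj
          rw [List.getElem_cons_succ, hbk]
          exact hdom u (by simpa using hu) (by simpa using hadj)
    | i + 1 =>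
      obtain ⟨j, hj, hij, hne, hdom⟩ := idx_of_goodL G t ht i (by simpa using hi)
      refine ⟨j + 1, by simpa using hj, by omega, ?_, ?_⟩
      · rw [List.getElem_cons_succ, List.getElem_cons_succ]; exact hne
      · simp only [List.getElem_cons_succ, List.drop_succ_cons]
        exact hdom

theorem goodL_map (G : RefGraph V) (σ : V → V) : ∀ (l : List V),
    (∀ x ∈ l, ∀ y ∈ l, (G.Adj x y ↔ G.Adj (σ x) (σ y))) →
    (∀ x ∈ l, ∀ y ∈ l, σ x = σ y → x = y) →
    G.goodL l → G.goodL (l.map σ)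
  | [], _, _, _ => trivial
  | a :: t, hadj, hinj, ⟨hh, ht⟩ => by
    refine ⟨?_, goodL_map G σ t
      (fun x hx y hy => hadj x (by simp [hx]) y (by simp [hy]))
      (fun x hx y hy => hinj x (by simp [hx]) y (by simp [hy])) ht⟩
    rcases hh with rfl | ⟨b, hb, hba, hdom⟩
    · exact Or.inl rfl
    · right
      refine ⟨σ b, List.mem_map_of_mem hb, fun he =>
        hba (hinj b (by simp [hb]) a (by simp) he), ?_⟩
      intro u hu hadjau
      obtain ⟨u₀, hu₀, rfl⟩ := List.mem_map.1 (show u ∈ List.map σ (a :: t) by simpa using hu)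
      have hu₀' : u₀ ∈ a :: t := hu₀
      have h1 : G.Adj a u₀ := (hadj a (by simp) u₀ hu₀').2 hadjau
      exact (hadj b (by simp [hb]) u₀ hu₀').1 (hdom u₀ hu₀' h1)

/-- `S` has a dismantling list. -/
def Good (G : RefGraph V) [DecidableEq V] (S : Finset V) : Prop :=
  ∃ l : List V, l.Nodup ∧ l.toFinset = S ∧ G.goodL l

theorem good_erase [DecidableEq V] (G : RefGraph V) : ∀ (S : Finset V), G.Good S →
    ∀ v ∈ S, ∀ w ∈ S, w ≠ v → (∀ u ∈ S, G.Adj v u → G.Adj w u) →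
    G.Good (S.erase v) := by
  intro S
  induction S using Finset.strongInductionOn with
  | _ S ih =>
    rintro ⟨l, nd, tf, gl⟩ v hv w hw hwv hdom
    match l, nd, tf, gl with
    | [], _, tf, _ => rw [← tf] at hv; simp at hv
    | a :: t, nd, tf, ⟨hh, ht⟩ =>
      have hat : a ∉ t := (List.nodup_cons.1 nd).1
      have ndt : t.Nodup := (List.nodup_cons.1 nd).2
      have haS : a ∈ S := by rw [← tf]; simp
      have tft : t.toFinset = S.erase a := by
        rw [← tf, List.toFinset_cons, Finset.erase_insert (by simpa using hat)]
      have hmemS : ∀ x, x ∈ S ↔ x ∈ a :: t := by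
        intro x; rw [← tf]; simp
      by_cases hva : v = a
      · subst hva; exact ⟨t, ndt, tft, ht⟩
      · have hvS' : v ∈ S.erase a := Finset.mem_erase.2 ⟨hva, hv⟩
        have hvt : v ∈ t := by
          have := (hmemS v).1 hv; simpa [hva] using this
        have htne : t ≠ [] := by rintro rfl; simp at hvt
        rcases hh with rfl | ⟨b, hbt, hba, hbdom⟩
        · exact absurd rfl htne
        have hbS : b ∈ S := (hmemS b).2 (by simp [hbt])
        have Hab : ∀ u ∈ S, G.Adj a u → G.Adj b u := fun u hu =>
          hbdom u ((hmemS u).1 hu)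
        by_cases htwin : w = a ∧ b = v
        · obtain ⟨hwa, hbv⟩ := htwin
          -- twins: N_S[a] = N_S[v]
          have Heq : ∀ u ∈ S, G.Adj a u ↔ G.Adj v u :=
            fun u hu => ⟨fun h => hbv ▸ Hab u hu h, fun h => hwa ▸ hdom u hu h⟩
          have Heq2 : ∀ u ∈ S, G.Adj u a ↔ G.Adj u v := fun u hu =>
            ⟨fun h => G.symm _ _ ((Heq u hu).1 (G.symm _ _ h)),
             fun h => G.symm _ _ ((Heq u hu).2 (G.symm _ _ h))⟩
          set σ : V → V := fun x => if x = v then a else x with hσ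
          have hσv : σ v = a := by simp [hσ]
          have hσx : ∀ x, x ≠ v → σ x = x := fun x hx => by simp [hσ, hx]
          have htS : ∀ x ∈ t, x ∈ S := fun x hx => (hmemS x).2 (by simp [hx])
          have htna : ∀ x ∈ t, x ≠ a := fun x hx h => hat (h ▸ hx)
          have key : ∀ x ∈ S, ∀ y ∈ S, (G.Adj x y ↔ G.Adj (σ x) (σ y)) := by
            intro x hx y hy
            by_cases hxv : x = v <;> by_cases hyv : y = v
            · rw [hxv, hyv, hσv]
              exact iff_of_true (G.refl v) (G.refl a)
            · rw [hxv, hσv, hσx y hyv]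
              exact ⟨fun h => G.symm _ _ ((Heq2 y hy).2 (G.symm _ _ h)),
                     fun h => G.symm _ _ ((Heq2 y hy).1 (G.symm _ _ h))⟩
            · rw [hyv, hσv, hσx x hxv]
              exact (Heq2 x hx).symm
            · rw [hσx x hxv, hσx y hyv]
          have keyinj : ∀ x ∈ t, ∀ y ∈ t, σ x = σ y → x = y := by
            intro x hx y hy hxy
            by_cases hxv : x = v <;> by_cases hyv : y = v
            · rw [hxv, hyv]
            · rw [hxv, hσv, hσx y hyv] at hxy
              exact absurd hxy.symm (htna y hy)
            · rw [hyv, hσv, hσx x hxv] at hxy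
              exact absurd hxy (htna x hx)
            · rwa [hσx x hxv, hσx y hyv] at hxy
          refine ⟨t.map σ, List.Nodup.map_on keyinj ndt, ?_, ?_⟩
          · ext x
            simp only [List.mem_toFinset, List.mem_map, Finset.mem_erase]
            constructor
            · rintro ⟨y, hy, rfl⟩
              by_cases hyv : y = v
              · subst hyv; rw [hσv]
                exact ⟨fun h => hva h.symm, haS⟩
              · rw [hσx y hyv]; exact ⟨hyv, htS y hy⟩
            · rintro ⟨hxv, hxS⟩
              by_cases hxa : x = a
              · exact ⟨v, hvt, by rw [hσv, hxa]⟩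
              · refine ⟨x, ?_, hσx x hxv⟩
                rw [← List.mem_toFinset, tft]
                exact Finset.mem_erase.2 ⟨hxa, hxS⟩
          · exact goodL_map G σ t
              (fun x hx y hy => key x (htS x hx) y (htS y hy)) keyinj ht
        · -- non-twin case
          push_neg at htwin
          obtain ⟨w', hw'S, hw'a, hw'v, hw'dom⟩ :
              ∃ w', w' ∈ S ∧ w' ≠ a ∧ w' ≠ v ∧ ∀ u ∈ S, G.Adj v u → G.Adj w' u := by
            by_cases hwa : w = a
            · subst hwa
              exact ⟨b, hbS, hba, htwin rfl, fun u hu h => Hab u hu (hdom u hu h)⟩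
            · exact ⟨w, hw, hwa, hwv, hdom⟩
          have hrec : G.Good ((S.erase a).erase v) :=
            ih (S.erase a) (Finset.erase_ssubset haS) ⟨t, ndt, tft, ht⟩
              v hvS' w' (Finset.mem_erase.2 ⟨hw'a, hw'S⟩) hw'v
              (fun u hu h => hw'dom u (Finset.mem_of_mem_erase hu) h)
          obtain ⟨l₂, nd₂, tf₂, g₂⟩ := hrec
          obtain ⟨b', hb'S, hb'a, hb'v, hb'dom⟩ :
              ∃ b', b' ∈ S ∧ b' ≠ a ∧ b' ≠ v ∧ ∀ u ∈ S, G.Adj a u → G.Adj b' u := by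
            by_cases hbv : b = v
            · subst hbv
              exact ⟨w', hw'S, hw'a, hw'v, fun u hu h => hw'dom u hu (Hab u hu h)⟩
            · exact ⟨b, hbS, hba, hbv, Hab⟩
          refine ⟨a :: l₂, ?_, ?_, ?_⟩
          · rw [List.nodup_cons]
            refine ⟨fun hal₂ => ?_, nd₂⟩
            have : a ∈ (S.erase a).erase v := by rw [← tf₂]; simpa using hal₂
            simp at this
          · rw [List.toFinset_cons, tf₂]
            have h1 : (S.erase a).erase v = (S.erase v).erase a := by
              ext x; simp; tauto
            rw [h1, Finset.insert_erase (Finset.mem_erase.2 ⟨fun h => hva h.symm, haS⟩)]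
          · refine ⟨Or.inr ⟨b', ?_, hb'a, ?_⟩, g₂⟩
            · rw [← List.mem_toFinset, tf₂]
              exact Finset.mem_erase.2 ⟨hb'v, Finset.mem_erase.2 ⟨hb'a, hb'S⟩⟩
            · intro u hu hadj
              have huS : u ∈ S := by
                rcases List.mem_cons.1 hu with rfl | hu
                · exact haS
                · have : u ∈ (S.erase a).erase v := by rw [← tf₂]; simpa using hu
                  exact Finset.mem_of_mem_erase (Finset.mem_of_mem_erase this)
              exact hb'dom u huS hadj

theorem good_sdiff [DecidableEq V] [Fintype V] (G : RefGraph V)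
    (hU : G.Good Finset.univ) (A : Finset V)
    (hA : ∀ a ∈ A, ∃ w, w ∉ A ∧ w ≠ a ∧ ∀ u, G.Adj a u → G.Adj w u) :
    ∀ T : Finset V, T ⊆ A → G.Good (Finset.univ \ T) := by
  intro T
  induction T using Finset.strongInductionOn with
  | _ T ih =>
    intro hTA
    rcases T.eq_empty_or_nonempty with rfl | ⟨a, haT⟩
    · simpa using hU
    · have hsplit : Finset.univ \ T = (Finset.univ \ T.erase a).erase a := by
        rw [← Finset.sdiff_insert, Finset.insert_erase haT]
      rw [hsplit]
      obtain ⟨w, hwA, hwa, hwdom⟩ := hA a (hTA haT)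
      apply good_erase G (Finset.univ \ T.erase a)
        (ih (T.erase a) (Finset.erase_ssubset haT)
          ((Finset.erase_subset a T).trans hTA))
        a (by simp) w (by simp; exact fun _ h => hwA (hTA h)) hwa
        (fun u _ h => hwdom u h)

theorem goodL_append (G : RefGraph V) (LB : List V) (hB : G.goodL LB) :
    ∀ LA : List V, (∀ a ∈ LA, ∃ b ∈ LB, b ≠ a ∧ ∀ u, G.Adj a u → G.Adj b u) →
    G.goodL (LA ++ LB)
  | [], _ => by simpa using hB
  | a :: LA', H => by
    refine ⟨Or.inr ?_, goodL_append G LB hB LA' (fun x hx => H x (by simp [hx]))⟩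
    obtain ⟨b, hb, hba, hdom⟩ := H a (by simp)
    exact ⟨b, List.mem_append_right _ hb, hba, fun u _ h => hdom u h⟩


theorem cr_le_one (G : RefGraph V) (v : V)
    (h : G.IsStrictCorner Set.univ v ∨ G.IsCliqueSet Set.univ) : G.cr v ≤ 1 := by
  apply sInf_le
  refine ⟨0, by simp, ?_, ?_⟩
  · show v ∈ Set.univ; trivial
  · exact h

theorem cr_eq_one_cases (G : RefGraph V) (v : V) (h : G.cr v = 1) :
    G.IsStrictCorner Set.univ v ∨ G.IsCliqueSet Set.univ := by
  set S : Set ℕ∞ := {n : ℕ∞ | ∃ m : ℕ, n = (m : ℕ∞) + 1 ∧ v ∈ G.lvl m ∧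
    (G.IsStrictCorner (G.lvl m) v ∨ G.IsCliqueSet (G.lvl m))} with hS
  have he : G.cr v = sInf S := rfl
  have hne : S.Nonempty := by
    by_contra hemp
    rw [Set.not_nonempty_iff_eq_empty] at hemp
    rw [he, hemp, sInf_empty] at h
    exact (by simp : (⊤:ℕ∞) ≠ 1) h
  have h1 : (1:ℕ∞) ∈ S := by rw [← h, he]; exact csInf_mem hne
  obtain ⟨m, hm1, hmlvl, hor⟩ := h1
  have hm0 : m = 0 := by
    have h2 : ((1:ℕ) : ℕ∞) = ((m+1 : ℕ) : ℕ∞) := by push_cast; exact hm1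
    have := Nat.cast_inj.1 h2
    omega
  subst hm0
  exact hor

end RefGraph
/-- If a graph has a dismantling ordering, then it has a
dismantling ordering in which every vertex of corner rank `1` appears before
every vertex of corner rank greater than `1`. -/
theorem dismantling_rank_one_first
    {V : Type*} [Fintype V] [Nonempty V] (G : RefGraph V)
    (hd : G.HasDismantling) :
    ∃ e : Fin (Fintype.card V) ≃ V, G.IsDismantlingOrdering e ∧
      ∀ p q : Fin (Fintype.card V), G.cr (e p) = 1 → 1 < G.cr (e q) → p < q := by
  classical
  obtain ⟨e₀, he₀⟩ := hd
  set L0 : List V := List.ofFn e₀ with hL0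
  have len0 : L0.length = Fintype.card V := by simp [hL0]
  have nd0 : L0.Nodup := List.nodup_ofFn.2 e₀.injective
  have tf0 : L0.toFinset = Finset.univ := by
    ext x
    simp only [List.mem_toFinset, hL0, List.mem_ofFn, Finset.mem_univ, iff_true]
    exact ⟨e₀.symm x, e₀.apply_symm_apply x⟩
  have hg0 : ∀ (k : ℕ) (hk : k < L0.length),
      L0[k]'hk = e₀ ⟨k, by rw [← len0]; exact hk⟩ := by
    intro k hk
    simp [hL0, List.getElem_ofFn]
  have g0 : G.goodL L0 := by
    apply RefGraph.goodL_of_idx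
    intro i hi
    obtain ⟨j, hij, hne, hdom⟩ := he₀ ⟨i, by omega⟩
      (by simpa using (by omega : i + 1 < Fintype.card V))
    refine ⟨(j:ℕ), by omega, Fin.lt_def.1 hij, ?_, ?_⟩
    · rw [hg0 (j:ℕ) (by omega), hg0 i (Nat.lt_of_succ_lt hi)]
      exact hne
    · intro u hu hadj
      rw [hg0 (j:ℕ) (by omega)]
      rw [hg0 i (Nat.lt_of_succ_lt hi)] at hadj
      obtain ⟨k, hk, hik, heq⟩ := (RefGraph.mem_drop_iff L0 i u).1 hu
      exact hdom u ⟨⟨k, by omega⟩, hik, (hg0 k hk).symm.trans heq⟩ hadj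
  have hUgood : G.Good Finset.univ := ⟨L0, nd0, tf0, g0⟩
  set A : Finset V := Finset.univ.filter (fun v => G.IsStrictCorner Set.univ v) with hAdef
  have hdomA : ∀ a, G.IsStrictCorner Set.univ a →
      ∃ w, ¬ G.IsStrictCorner Set.univ w ∧ w ≠ a ∧ ∀ u, G.Adj a u → G.Adj w u := by
    intro a ha
    have hiff : ∀ x, G.IsStrictCorner Set.univ x ↔
        ∃ w, (∀ u, G.Adj x u → G.Adj w u) ∧ ∃ u, G.Adj w u ∧ ¬ G.Adj x u := by
      intro x
      constructor
      · rintro ⟨w, -, -, hdom, u, -, h1, h2⟩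
        exact ⟨w, fun u hu => hdom u trivial hu, u, h1, h2⟩
      · rintro ⟨w, hdom, u, h1, h2⟩
        exact ⟨w, trivial, trivial, fun u _ h => hdom u h, u, trivial, h1, h2⟩
    set D : Finset V := Finset.univ.filter
      (fun w => (∀ u, G.Adj a u → G.Adj w u) ∧ ∃ u, G.Adj w u ∧ ¬ G.Adj a u) with hD
    obtain ⟨w0, hw0dom, u0, hu0⟩ := (hiff a).1 ha
    have hDne : D.Nonempty := ⟨w0, by
      rw [hD, Finset.mem_filter]
      exact ⟨Finset.mem_univ _, hw0dom, u0, hu0⟩⟩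
    obtain ⟨w, hwD, hwmax⟩ := Finset.exists_max_image D
      (fun w => (Finset.univ.filter (G.Adj w)).card) hDne
    rw [hD, Finset.mem_filter] at hwD
    obtain ⟨-, hwdom, u₀, hu₀w, hu₀a⟩ := hwD
    refine ⟨w, ?_, ?_, hwdom⟩
    · intro hw
      obtain ⟨w', hw'dom, u₁, h₁, h₂⟩ := (hiff w).1 hw
      have hw'D : w' ∈ D := by
        rw [hD, Finset.mem_filter]
        exact ⟨Finset.mem_univ _, fun u hu => hw'dom u (hwdom u hu), u₀,
          hw'dom u₀ hu₀w, hu₀a⟩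
      have hsub : Finset.univ.filter (G.Adj w) ⊆ Finset.univ.filter (G.Adj w') :=
        fun x hx => Finset.mem_filter.2 ⟨Finset.mem_univ _,
          hw'dom x (Finset.mem_filter.1 hx).2⟩
      have hlt := Finset.card_lt_card ((Finset.ssubset_iff_of_subset hsub).2
        ⟨u₁, Finset.mem_filter.2 ⟨Finset.mem_univ _, h₁⟩,
          fun hm => h₂ (Finset.mem_filter.1 hm).2⟩)
      exact absurd (hwmax w' hw'D) (not_le.2 hlt)
    · rintro rfl; exact hu₀a hu₀w
  have hBgood : G.Good (Finset.univ \ A) := by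
    apply RefGraph.good_sdiff G hUgood A ?_ A (subset_refl A)
    intro a haA
    rw [hAdef, Finset.mem_filter] at haA
    obtain ⟨w, hw1, hw2, hw3⟩ := hdomA a haA.2
    refine ⟨w, ?_, hw2, hw3⟩
    rw [hAdef, Finset.mem_filter]
    exact fun hc => hw1 hc.2
  obtain ⟨LB, ndB, tfB, gB⟩ := hBgood
  set LA := A.toList with hLA
  set L : List V := LA ++ LB with hL
  have ndA : LA.Nodup := A.nodup_toList
  have hmemLA : ∀ x, x ∈ LA ↔ x ∈ A := fun x => Finset.mem_toList
  have hmemLB : ∀ x, x ∈ LB → x ∉ A := by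
    intro x hx
    have : x ∈ Finset.univ \ A := by rw [← tfB]; exact List.mem_toFinset.2 hx
    exact (Finset.mem_sdiff.1 this).2
  have ndL : L.Nodup := ndA.append ndB (fun x hx hxB => hmemLB x hxB ((hmemLA x).1 hx))
  have tfL : L.toFinset = Finset.univ := by
    rw [hL, List.toFinset_append, hLA, Finset.toList_toFinset, tfB,
      Finset.union_sdiff_of_subset (Finset.subset_univ A)]
  have lenL : L.length = Fintype.card V := by
    rw [← List.toFinset_card_of_nodup ndL, tfL, Finset.card_univ]
  have gL : G.goodL L := by
    apply RefGraph.goodL_append G LB gB LA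
    intro a haLA
    have haA := (hmemLA a).1 haLA
    rw [hAdef, Finset.mem_filter] at haA
    obtain ⟨w, hw1, hw2, hw3⟩ := hdomA a haA.2
    refine ⟨w, ?_, hw2, hw3⟩
    rw [← List.mem_toFinset, tfB, Finset.mem_sdiff]
    refine ⟨Finset.mem_univ _, ?_⟩
    rw [hAdef, Finset.mem_filter]
    exact fun hc => hw1 hc.2
  have hfinj : Function.Injective
      (fun i : Fin (Fintype.card V) => L[(i:ℕ)]'(by omega)) := by
    intro i j hij
    have h2 := (List.nodup_iff_injective_get.1 ndL)
      (a₁ := ⟨(i:ℕ), by omega⟩) (a₂ := ⟨(j:ℕ), by omega⟩)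
      (by simpa [List.get_eq_getElem] using hij)
    exact Fin.ext (by simpa using congrArg Fin.val h2)
  have hbij : Function.Bijective
      (fun i : Fin (Fintype.card V) => L[(i:ℕ)]'(by omega)) :=
    (Fintype.bijective_iff_injective_and_card _).2 ⟨hfinj, by simp⟩
  refine ⟨Equiv.ofBijective _ hbij, ?_, ?_⟩
  · intro i hi
    obtain ⟨j, hj, hij, hne, hdom⟩ := RefGraph.idx_of_goodL G L gL (i:ℕ) (by omega)
    refine ⟨⟨j, by omega⟩, by simpa [Fin.lt_def] using hij, ?_, ?_⟩
    · exact hne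
    · rintro u ⟨m, him, hem⟩ hadj
      exact hdom u ((RefGraph.mem_drop_iff L (i:ℕ) u).2
        ⟨(m:ℕ), by omega, him, hem⟩) hadj
  · intro p q hp hq
    by_cases hcl : G.IsCliqueSet Set.univ
    · exact absurd (RefGraph.cr_le_one G _ (Or.inr hcl)) (not_le.2 hq)
    · have hpA : (L[(p:ℕ)]'(by omega)) ∈ A := by
        rcases RefGraph.cr_eq_one_cases G _ hp with h | h
        · rw [hAdef, Finset.mem_filter]
          exact ⟨Finset.mem_univ _, h⟩
        · exact absurd h hcl
      have hqA : (L[(q:ℕ)]'(by omega)) ∉ A := by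
        intro hqA
        rw [hAdef, Finset.mem_filter] at hqA
        exact absurd (RefGraph.cr_le_one G _ (Or.inl hqA.2)) (not_le.2 hq)
      have hplen : (p:ℕ) < LA.length := by
        by_contra hge
        push_neg at hge
        have hlb : (p:ℕ) - LA.length < LB.length := by
          have h3 : L.length = LA.length + LB.length := by
            rw [hL, List.length_append]
          omega
        have hx : L[(p:ℕ)]'(by omega) = LB[(p:ℕ) - LA.length]'hlb :=
          List.getElem_append_right hge
        have hmem : L[(p:ℕ)]'(by omega) ∈ LB := by
          rw [hx]; exact List.getElem_mem hlb
        exact hmemLB _ hmem hpA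
      have hqlen : LA.length ≤ (q:ℕ) := by
        by_contra hlt
        push_neg at hlt
        have hx : L[(q:ℕ)]'(by omega) = LA[(q:ℕ)]'hlt :=
          List.getElem_append_left hlt
        exact hqA (by rw [hx]; exact (hmemLA _).1 (List.getElem_mem hlt))
      exact Fin.lt_def.2 (lt_of_lt_of_le hplen hqlen)
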